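/- arXiv:2310.03054 — 3 statements merged into one kernel-verified Lean document; each statement's English description precedes it below -/
import Mathlib

section
/- Let X, Z be independent ℝ^d-valued random variables and Y an ℝ^n-valued random variable on a common probability space. If T : ℝ^d × ℝ^n → ℝ^d is measurable and the joint law of (T(Z,Y), Y) equals the joint law of (X, Y), then for P_Y-almost every y, the pushforward of the law of Z under T(·, y) equals the conditional law P_{X|Y=y}. -/
open MeasureTheory ProbabilityTheory

/-- **Fundamental principle of conditional generative modelling.**
If `X, Z` are independent `ℝ^d`-valued random variables (here: `Z` independent of `Y`),
`Y` is `ℝ^n`-valued, `T` is measurable and the joint law of `(T(Z,Y), Y)` equals the joint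
law of `(X,Y)`, then for `P_Y`-a.e. `y` the pushforward of the law of `Z` under `T(·,y)`
equals the conditional law `P_{X|Y=y}` (a regular conditional distribution). -/
theorem pushforward_eq_condDistrib (d n : ℕ)
    {Ω : Type*} [MeasurableSpace Ω] (P : Measure Ω) [IsProbabilityMeasure P]
    (X Z : Ω → EuclideanSpace ℝ (Fin d)) (Y : Ω → EuclideanSpace ℝ (Fin n))
    (hX : Measurable X) (hZ : Measurable Z) (hY : Measurable Y)
    (hindep : IndepFun Z Y P)
    (T : EuclideanSpace ℝ (Fin d) → EuclideanSpace ℝ (Fin n) → EuclideanSpace ℝ (Fin d))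
    (hT : Measurable (fun p : EuclideanSpace ℝ (Fin d) × EuclideanSpace ℝ (Fin n) => T p.1 p.2))
    (hjoint : P.map (fun ω => (T (Z ω) (Y ω), Y ω)) = P.map (fun ω => (X ω, Y ω))) :
    ∀ᵐ y ∂(P.map Y),
      (P.map Z).map (fun z => T z y) = condDistrib X Y P y := by
  haveI : IsProbabilityMeasure (P.map Z) := Measure.isProbabilityMeasure_map hZ.aemeasurable
  haveI : IsProbabilityMeasure (P.map Y) := Measure.isProbabilityMeasure_map hY.aemeasurable
  -- the candidate kernel
  set κ : Kernel (EuclideanSpace ℝ (Fin n)) (EuclideanSpace ℝ (Fin d)) :=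
    Kernel.map ((Kernel.const _ (P.map Z)) ×ₖ Kernel.deterministic id measurable_id)
      (fun p => T p.1 p.2) with hκdef
  haveI : IsMarkovKernel κ := by
    rw [hκdef]
    exact Kernel.IsMarkovKernel.map _ hT
  have hκ_apply : ∀ y, κ y = (P.map Z).map (fun z => T z y) := by
    intro y
    rw [hκdef, Kernel.map_apply _ hT, Kernel.prod_apply, Kernel.const_apply,
      Kernel.deterministic_apply, id_eq, Measure.prod_dirac,
      Measure.map_map hT measurable_prodMk_right]
    rfl
  -- the joint law of (Y, X)
  set ρ : Measure (EuclideanSpace ℝ (Fin n) × EuclideanSpace ℝ (Fin d)) :=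
    P.map (fun ω => (Y ω, X ω)) with hρdef
  haveI : IsProbabilityMeasure ρ :=
    Measure.isProbabilityMeasure_map (hY.prodMk hX).aemeasurable
  have hTZY : Measurable (fun ω => T (Z ω) (Y ω)) := hT.comp (hZ.prodMk hY)
  have hg : Measurable (fun p : EuclideanSpace ℝ (Fin n) × EuclideanSpace ℝ (Fin d) =>
      (p.1, T p.2 p.1)) :=
    measurable_fst.prodMk (hT.comp (measurable_snd.prodMk measurable_fst))
  -- swap the joint law identity
  have hswap : ρ = P.map (fun ω => (Y ω, T (Z ω) (Y ω))) := by
    have h1 : ρ = (P.map (fun ω => (X ω, Y ω))).map Prod.swap := by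
      rw [Measure.map_map measurable_swap (hX.prodMk hY)]; rfl
    rw [h1, ← hjoint, Measure.map_map measurable_swap (hTZY.prodMk hY)]; rfl
  -- independence gives the product law for (Y, Z)
  have hprod : P.map (fun ω => (Y ω, Z ω)) = (P.map Y).prod (P.map Z) :=
    (indepFun_iff_map_prod_eq_prod_map_map hY.aemeasurable hZ.aemeasurable).mp hindep.symm
  -- disintegration property
  have hρ : ρ = (P.map Y) ⊗ₘ κ := by
    rw [hswap]
    have h2 : P.map (fun ω => (Y ω, T (Z ω) (Y ω)))
        = ((P.map Y).prod (P.map Z)).map (fun p => (p.1, T p.2 p.1)) := by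
      rw [← hprod, Measure.map_map hg (hY.prodMk hZ)]; rfl
    rw [h2]
    ext s hs
    rw [Measure.map_apply hg hs, Measure.compProd_apply hs,
      Measure.prod_apply (hg hs)]
    refine lintegral_congr fun y => ?_
    rw [hκ_apply y, Measure.map_apply
      (show Measurable fun z => T z y from hT.comp (measurable_id.prodMk measurable_const))
      (measurable_prodMk_left hs)]
    rfl
  have hfst : ρ.fst = P.map Y := Measure.fst_map_prodMk hX
  have := ProbabilityTheory.eq_condKernel_of_measure_eq_compProd κ (by rw [hfst]; exact hρ)
  rw [hfst] at this
  filter_upwards [this] with y hy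
  rw [← hκ_apply y, hy, condDistrib]
end

section
/- Let S_d ⊂ ℝ^d be compact, Z an S_d-valued random variable with law P_Z, and F, G ∈ L²(P_Z; ℝ^d). Then for the negative distance kernel K(x,y) = -‖x-y‖, D_K(F_# P_Z, G_# P_Z) ≤ √2 · (E_{z∼P_Z}[‖F(z) - G(z)‖])^{1/2}. -/
open MeasureTheory

/-- Squared MMD of a kernel `k`. -/
noncomputable def mmdSq {E : Type*} [MeasurableSpace E] (k : E → E → ℝ) (μ ν : Measure E) : ℝ :=
  (1 / 2) * ∫ x, ∫ y, k x y ∂μ ∂μ - (∫ x, ∫ y, k x y ∂ν ∂μ) + (1 / 2) * ∫ x, ∫ y, k x y ∂ν ∂ν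

/-- MMD with kernel `k`. -/
noncomputable def mmd {E : Type*} [MeasurableSpace E] (k : E → E → ℝ) (μ ν : Measure E) : ℝ :=
  Real.sqrt (mmdSq k μ ν)

section Aux

variable {α : Type*} [MeasurableSpace α] {μ : Measure α} [IsProbabilityMeasure μ]

lemma integrable_comp_fst' {f : α → ℝ} (hf : Integrable f μ) :
    Integrable (fun p : α × α => f p.1) (μ.prod μ) := by
  have h1 : Integrable f ((μ.prod μ).map Prod.fst) := by simpa using hf
  exact (integrable_map_measure h1.aestronglyMeasurable measurable_fst.aemeasurable).mp h1

lemma integrable_comp_snd' {f : α → ℝ} (hf : Integrable f μ) :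
    Integrable (fun p : α × α => f p.2) (μ.prod μ) := by
  have h1 : Integrable f ((μ.prod μ).map Prod.snd) := by simpa using hf
  exact (integrable_map_measure h1.aestronglyMeasurable measurable_snd.aemeasurable).mp h1

lemma integral_comp_fst' {f : α → ℝ} (hf : AEStronglyMeasurable f μ) :
    ∫ p : α × α, f p.1 ∂(μ.prod μ) = ∫ z, f z ∂μ := by
  have h1 : AEStronglyMeasurable f ((μ.prod μ).map Prod.fst) := by simpa using hf
  rw [← integral_map measurable_fst.aemeasurable h1]
  simp

lemma integral_comp_snd' {f : α → ℝ} (hf : AEStronglyMeasurable f μ) :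
    ∫ p : α × α, f p.2 ∂(μ.prod μ) = ∫ z, f z ∂μ := by
  have h1 : AEStronglyMeasurable f ((μ.prod μ).map Prod.snd) := by simpa using hf
  rw [← integral_map measurable_snd.aemeasurable h1]
  simp

variable {d : ℕ}

lemma integrable_norm_sub_prod (F G : α → EuclideanSpace ℝ (Fin d))
    (hFm : Measurable F) (hGm : Measurable G)
    (hFi : Integrable F μ) (hGi : Integrable G μ) :
    Integrable (fun p : α × α => ‖F p.1 - G p.2‖) (μ.prod μ) := by
  refine Integrable.mono ((integrable_comp_fst' hFi.norm).add (integrable_comp_snd' hGi.norm))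
    ((((hFm.comp measurable_fst).sub (hGm.comp measurable_snd)).norm).aestronglyMeasurable)
    (Filter.Eventually.of_forall fun p => ?_)
  have h1 : ‖F p.1 - G p.2‖ ≤ ‖F p.1‖ + ‖G p.2‖ := norm_sub_le _ _
  have h2 : (0:ℝ) ≤ ‖F p.1‖ + ‖G p.2‖ := by positivity
  simpa [Real.norm_eq_abs, abs_of_nonneg, norm_nonneg, h2] using h1

/-- double-integral of kernel against two pushforwards, as a product integral. -/
lemma double_integral_map' (F G : α → EuclideanSpace ℝ (Fin d))
    (hFm : Measurable F) (hGm : Measurable G)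
    (hint : Integrable (fun p : α × α => ‖F p.1 - G p.2‖) (μ.prod μ)) :
    ∫ x, ∫ y, -‖x - y‖ ∂(μ.map G) ∂(μ.map F)
      = -∫ p : α × α, ‖F p.1 - G p.2‖ ∂(μ.prod μ) := by
  have inner : ∀ x : EuclideanSpace ℝ (Fin d),
      ∫ y, -‖x - y‖ ∂(μ.map G) = ∫ w, -‖x - G w‖ ∂μ := fun x =>
    integral_map hGm.aemeasurable
      (Continuous.aestronglyMeasurable (by continuity))
  have hsm : StronglyMeasurable (fun q : EuclideanSpace ℝ (Fin d) × α => -‖q.1 - G q.2‖) :=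
    ((measurable_fst.sub (hGm.comp measurable_snd)).norm.neg).stronglyMeasurable
  have houter : AEStronglyMeasurable
      (fun x : EuclideanSpace ℝ (Fin d) => ∫ w, -‖x - G w‖ ∂μ) (μ.map F) :=
    hsm.integral_prod_right'.aestronglyMeasurable
  calc ∫ x, ∫ y, -‖x - y‖ ∂(μ.map G) ∂(μ.map F)
      = ∫ x, ∫ w, -‖x - G w‖ ∂μ ∂(μ.map F) := by simp only [inner]
    _ = ∫ z, ∫ w, -‖F z - G w‖ ∂μ ∂μ := integral_map hFm.aemeasurable houter
    _ = ∫ p : α × α, -‖F p.1 - G p.2‖ ∂(μ.prod μ) := integral_integral hint.neg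
    _ = -∫ p : α × α, ‖F p.1 - G p.2‖ ∂(μ.prod μ) := integral_neg _

end Aux

/-- For a random variable `Z` taking values in a compact set `S_d ⊂ ℝ^d` with law `P_Z`, and
`F, G ∈ L²(P_Z; ℝ^d)`, the MMD with negative distance kernel satisfies
`D_K(F_# P_Z, G_# P_Z) ≤ √2 (E[‖F(z)-G(z)‖])^{1/2}`. -/
theorem mmd_pushforward_le (d : ℕ) (Sd : Set (EuclideanSpace ℝ (Fin d))) (hSd : IsCompact Sd)
    (PZ : Measure (EuclideanSpace ℝ (Fin d))) [IsProbabilityMeasure PZ]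
    (hsupp : ∀ᵐ z ∂PZ, z ∈ Sd)
    (F G : EuclideanSpace ℝ (Fin d) → EuclideanSpace ℝ (Fin d))
    (hFmeas : Measurable F) (hGmeas : Measurable G)
    (hF : MemLp F 2 PZ) (hG : MemLp G 2 PZ) :
    mmd (fun x y => -‖x - y‖) (PZ.map F) (PZ.map G)
      ≤ Real.sqrt 2 * (∫ z, ‖F z - G z‖ ∂PZ) ^ (1 / 2 : ℝ) := by
  set π := PZ.prod PZ with hπ
  have hFi : Integrable F PZ := hF.integrable one_le_two
  have hGi : Integrable G PZ := hG.integrable one_le_two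
  have hFF := integrable_norm_sub_prod (μ := PZ) F F hFmeas hFmeas hFi hFi
  have hGG := integrable_norm_sub_prod (μ := PZ) G G hGmeas hGmeas hGi hGi
  have hFG := integrable_norm_sub_prod (μ := PZ) F G hFmeas hGmeas hFi hGi
  have hFGz : Integrable (fun z => ‖F z - G z‖) PZ := (hFi.sub hGi).norm
  have hFG1 : Integrable (fun p : _ × _ => ‖F p.1 - G p.1‖) π := integrable_comp_fst' hFGz
  have hFG2 : Integrable (fun p : _ × _ => ‖F p.2 - G p.2‖) π := integrable_comp_snd' hFGz
  set e := ∫ z, ‖F z - G z‖ ∂PZ with he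
  have he0 : 0 ≤ e := integral_nonneg fun z => norm_nonneg _
  have hFFe := double_integral_map' (μ := PZ) F F hFmeas hFmeas hFF
  have hGGe := double_integral_map' (μ := PZ) G G hGmeas hGmeas hGG
  have hFGe := double_integral_map' (μ := PZ) F G hFmeas hGmeas hFG
  have hkey : mmdSq (fun x y => -‖x - y‖) (PZ.map F) (PZ.map G) ≤ e := by
    rw [mmdSq, hFFe, hGGe, hFGe]
    have hmono : ∫ p : _ × _, ‖F p.1 - G p.2‖ ∂π
        ≤ ∫ p : _ × _, (1/2) * ‖F p.1 - F p.2‖ + (1/2) * ‖G p.1 - G p.2‖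
          + (1/2) * ‖F p.1 - G p.1‖ + (1/2) * ‖F p.2 - G p.2‖ ∂π := by
      refine integral_mono hFG
        ((((hFF.const_mul _).add (hGG.const_mul _)).add (hFG1.const_mul _)).add
          (hFG2.const_mul _)) fun p => ?_
      have t1 : ‖F p.1 - G p.2‖ ≤ ‖F p.1 - F p.2‖ + ‖F p.2 - G p.2‖ :=
        norm_sub_le_norm_sub_add_norm_sub _ _ _
      have t2 : ‖F p.1 - G p.2‖ ≤ ‖F p.1 - G p.1‖ + ‖G p.1 - G p.2‖ :=
        norm_sub_le_norm_sub_add_norm_sub _ _ _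
      simp only
      linarith
    have hsplit : ∫ p : _ × _, (1/2) * ‖F p.1 - F p.2‖ + (1/2) * ‖G p.1 - G p.2‖
          + (1/2) * ‖F p.1 - G p.1‖ + (1/2) * ‖F p.2 - G p.2‖ ∂π
        = (1/2) * ∫ p : _ × _, ‖F p.1 - F p.2‖ ∂π + (1/2) * ∫ p : _ × _, ‖G p.1 - G p.2‖ ∂π
          + (1/2) * e + (1/2) * e := by
      have s4 : ∫ p : _ × _, ((1/2) * ‖F p.1 - F p.2‖ + (1/2) * ‖G p.1 - G p.2‖
            + (1/2) * ‖F p.1 - G p.1‖) + (1/2) * ‖F p.2 - G p.2‖ ∂π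
          = (∫ p : _ × _, (1/2) * ‖F p.1 - F p.2‖ + (1/2) * ‖G p.1 - G p.2‖
            + (1/2) * ‖F p.1 - G p.1‖ ∂π) + ∫ p : _ × _, (1/2) * ‖F p.2 - G p.2‖ ∂π :=
        integral_add (((hFF.const_mul _).add (hGG.const_mul _)).add (hFG1.const_mul _))
          (hFG2.const_mul _)
      have s3 : ∫ p : _ × _, ((1/2) * ‖F p.1 - F p.2‖ + (1/2) * ‖G p.1 - G p.2‖)
            + (1/2) * ‖F p.1 - G p.1‖ ∂π
          = (∫ p : _ × _, (1/2) * ‖F p.1 - F p.2‖ + (1/2) * ‖G p.1 - G p.2‖ ∂π)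
            + ∫ p : _ × _, (1/2) * ‖F p.1 - G p.1‖ ∂π :=
        integral_add ((hFF.const_mul _).add (hGG.const_mul _)) (hFG1.const_mul _)
      have s2 : ∫ p : _ × _, (1/2) * ‖F p.1 - F p.2‖ + (1/2) * ‖G p.1 - G p.2‖ ∂π
          = (∫ p : _ × _, (1/2) * ‖F p.1 - F p.2‖ ∂π)
            + ∫ p : _ × _, (1/2) * ‖G p.1 - G p.2‖ ∂π :=
        integral_add (hFF.const_mul _) (hGG.const_mul _)
      rw [s4, s3, s2, integral_const_mul, integral_const_mul, integral_const_mul, integral_const_mul,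
        integral_comp_fst' hFGz.aestronglyMeasurable, integral_comp_snd' hFGz.aestronglyMeasurable]
    have := hmono.trans_eq hsplit
    linarith
  have h2 : mmd (fun x y => -‖x - y‖) (PZ.map F) (PZ.map G) ≤ Real.sqrt e := by
    rw [mmd]
    exact Real.sqrt_le_sqrt hkey
  refine h2.trans ?_
  rw [← Real.sqrt_eq_rpow]
  nlinarith [Real.sqrt_nonneg e, Real.sq_sqrt he0, Real.sqrt_le_sqrt (show (1:ℝ) ≤ 2 by norm_num),
    Real.sqrt_one, Real.sqrt_nonneg (2:ℝ)]
end

section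
/- Fix m ∈ ℕ and 0 < ε < 1/6. Define P_{X,Y} := ½U_{Q_ε(0,0)} + ½U_{Q_ε(m,1)} and P_{X̃,Y} := ½U_{Q_ε(m,0)} + ½U_{Q_ε(0,1)} on ℝ × ℝ, where U_A is the uniform distribution on A and Q_ε(a,b) the ε-ball around (a,b) in the ∞-norm. Then E_{y∼P_Y}[D_K(P_{X̃|Y=y}, P_{X|Y=y})] ≥ √(m - 6ε), where D_K is the MMD with negative distance kernel on ℝ. -/
open MeasureTheory

/-- Uniform probability measure on the interval `[a,b]`. -/
noncomputable def unifIcc (a b : ℝ) : Measure ℝ :=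
  (ENNReal.ofReal (b - a))⁻¹ • volume.restrict (Set.Icc a b)

open Set

lemma unifIcc_univ {a b : ℝ} (h : a < b) : unifIcc a b Set.univ = 1 := by
  rw [unifIcc, Measure.smul_apply, Measure.restrict_apply_univ, Real.volume_Icc, smul_eq_mul,
    ENNReal.inv_mul_cancel (ENNReal.ofReal_pos.mpr (by linarith)).ne' ENNReal.ofReal_ne_top]

lemma isProb_unifIcc {a b : ℝ} (h : a < b) : IsProbabilityMeasure (unifIcc a b) :=
  ⟨unifIcc_univ h⟩

lemma ae_mem_unifIcc {a b : ℝ} : ∀ᵐ x ∂unifIcc a b, x ∈ Icc a b := by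
  rw [unifIcc]
  exact Measure.ae_smul_measure (ae_restrict_mem measurableSet_Icc) _

lemma integrable_unifIcc {f : ℝ → ℝ} (hf : Continuous f) {a b : ℝ} (h : a < b) :
    Integrable f (unifIcc a b) := by
  rw [unifIcc]
  exact (hf.integrableOn_Icc).smul_measure
    (ENNReal.inv_ne_top.mpr (ENNReal.ofReal_pos.mpr (by linarith)).ne')

lemma integral_le_of_forall {a b : ℝ} (h : a < b) {f : ℝ → ℝ}
    (hf : Integrable f (unifIcc a b)) {c : ℝ} (hc : ∀ y ∈ Icc a b, f y ≤ c) :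
    ∫ y, f y ∂unifIcc a b ≤ c := by
  haveI := isProb_unifIcc h
  calc ∫ y, f y ∂unifIcc a b ≤ ∫ _, c ∂unifIcc a b :=
        integral_mono_ae hf (integrable_const c) (ae_mem_unifIcc.mono hc)
    _ = c := by simp

lemma le_integral_of_forall {a b : ℝ} (h : a < b) {f : ℝ → ℝ}
    (hf : Integrable f (unifIcc a b)) {c : ℝ} (hc : ∀ y ∈ Icc a b, c ≤ f y) :
    c ≤ ∫ y, f y ∂unifIcc a b := by
  haveI := isProb_unifIcc h
  calc c = ∫ _, c ∂unifIcc a b := by simp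
    _ ≤ ∫ y, f y ∂unifIcc a b :=
        integral_mono_ae (integrable_const c) hf (ae_mem_unifIcc.mono hc)

lemma abs_le_of_mem_Icc {a b x : ℝ} (hx : x ∈ Icc a b) : |x| ≤ |a| + |b| :=
  abs_le.2 ⟨by linarith [neg_abs_le a, abs_nonneg b, hx.1],
    by linarith [le_abs_self b, abs_nonneg a, hx.2]⟩

lemma integrable_inner {a b c d : ℝ} (hab : a < b) (hcd : c < d) :
    Integrable (fun x => ∫ y, -|x - y| ∂unifIcc a b) (unifIcc c d) := by
  haveI := isProb_unifIcc hab
  haveI := isProb_unifIcc hcd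
  have hsm : StronglyMeasurable (fun x => ∫ y, -|x - y| ∂unifIcc a b) := by
    have hcont : Continuous (fun p : ℝ × ℝ => -|p.1 - p.2|) := by continuity
    exact hcont.stronglyMeasurable.integral_prod_right'
  refine Integrable.mono' (integrable_const ((|c| + |d|) + (|a| + |b|)))
    hsm.aestronglyMeasurable ?_
  filter_upwards [ae_mem_unifIcc] with x hx
  calc ‖∫ y, -|x - y| ∂unifIcc a b‖ ≤ ∫ y, ‖-|x - y|‖ ∂unifIcc a b :=
        norm_integral_le_integral_norm _
    _ ≤ (|c| + |d|) + (|a| + |b|) := by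
        apply integral_le_of_forall hab
        · exact (integrable_unifIcc (by continuity) hab).norm
        · intro y hy
          have h1 : |x| ≤ |c| + |d| := abs_le_of_mem_Icc hx
          have h2 : |y| ≤ |a| + |b| := abs_le_of_mem_Icc hy
          have h3 : |x - y| ≤ |x| + |y| := abs_sub x y
          simp only [norm_neg, Real.norm_eq_abs, abs_abs]
          linarith

lemma mmdSq_bound {a b c d : ℝ} (hab : a < b) (hcd : c < d) (R : ℝ)
    (hcross : ∀ x ∈ Icc c d, ∀ y ∈ Icc a b, -|x - y| ≤ -R) :
    R - (b - a) - (d - c) ≤ mmdSq (fun x x' => -|x - x'|) (unifIcc c d) (unifIcc a b) := by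
  have T1 : -(d - c) ≤ ∫ x, ∫ y, -|x - y| ∂unifIcc c d ∂unifIcc c d := by
    apply le_integral_of_forall hcd (integrable_inner hcd hcd)
    intro x hx
    apply le_integral_of_forall hcd (integrable_unifIcc (by continuity) hcd)
    intro y hy
    have : |x - y| ≤ d - c := abs_le.2 ⟨by linarith [hx.1, hy.2], by linarith [hx.2, hy.1]⟩
    linarith
  have T2 : -(b - a) ≤ ∫ x, ∫ y, -|x - y| ∂unifIcc a b ∂unifIcc a b := by
    apply le_integral_of_forall hab (integrable_inner hab hab)
    intro x hx
    apply le_integral_of_forall hab (integrable_unifIcc (by continuity) hab)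
    intro y hy
    have : |x - y| ≤ b - a := abs_le.2 ⟨by linarith [hx.1, hy.2], by linarith [hx.2, hy.1]⟩
    linarith
  have T3 : ∫ x, ∫ y, -|x - y| ∂unifIcc a b ∂unifIcc c d ≤ -R := by
    apply integral_le_of_forall hcd (integrable_inner hab hcd)
    intro x hx
    apply integral_le_of_forall hab (integrable_unifIcc (by continuity) hab)
    intro y hy
    exact hcross x hx y hy
  unfold mmdSq
  linarith

/-- **Counterexample lower bound.** For `m ∈ ℕ` and `0 < ε < 1/6`, with
`P_{X,Y} = ½U_{Q_ε(0,0)} + ½U_{Q_ε(m,1)}` and `P_{X̃,Y} = ½U_{Q_ε(m,0)} + ½U_{Q_ε(0,1)}`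
(so that `P_Y = ½U_{[-ε,ε]} + ½U_{[1-ε,1+ε]}`, `P_{X|Y=y} = U_{[-ε,ε]}` for `y` near `0` and
`U_{[m-ε,m+ε]}` for `y` near `1`, swapped for `X̃`), the expected MMD of the posteriors with
negative distance kernel is at least `√(m - 6ε)`. -/
theorem expected_posterior_mmd_lower_bound (m : ℕ) (ε : ℝ) (hε : 0 < ε) (hε6 : ε < 1 / 6) :
    Real.sqrt ((m : ℝ) - 6 * ε) ≤
      ∫ y, mmd (fun x x' => -|x - x'|)
          (if y < 1 / 2 then unifIcc ((m : ℝ) - ε) ((m : ℝ) + ε) else unifIcc (-ε) ε)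
          (if y < 1 / 2 then unifIcc (-ε) ε else unifIcc ((m : ℝ) - ε) ((m : ℝ) + ε))
        ∂((2 : ENNReal)⁻¹ • unifIcc (-ε) ε + (2 : ENNReal)⁻¹ • unifIcc (1 - ε) (1 + ε)) := by
  have h0 : -ε < ε := by linarith
  have h1 : 1 - ε < 1 + ε := by linarith
  have hm : (m : ℝ) - ε < (m : ℝ) + ε := by linarith
  have hm0 : (0 : ℝ) ≤ (m : ℝ) := Nat.cast_nonneg m
  set k : ℝ → ℝ → ℝ := fun x x' => -|x - x'| with hk
  set A := unifIcc ((m : ℝ) - ε) ((m : ℝ) + ε) with hA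
  set B := unifIcc (-ε) ε with hB
  have hC1 : Real.sqrt ((m : ℝ) - 6 * ε) ≤ mmd k A B := by
    apply Real.sqrt_le_sqrt
    refine le_trans ?_ (mmdSq_bound h0 hm ((m : ℝ) - 2 * ε) ?_)
    · linarith
    · intro x hx y hy
      have := le_abs_self (x - y)
      simp only [mem_Icc] at hx hy
      linarith [hx.1, hy.2, this]
  have hC2 : Real.sqrt ((m : ℝ) - 6 * ε) ≤ mmd k B A := by
    apply Real.sqrt_le_sqrt
    refine le_trans ?_ (mmdSq_bound hm h0 ((m : ℝ) - 2 * ε) ?_)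
    · linarith
    · intro x hx y hy
      have := neg_abs_le (x - y)
      simp only [mem_Icc] at hx hy
      linarith [hx.2, hy.1, this]
  set P := ((2 : ENNReal)⁻¹ • unifIcc (-ε) ε + (2 : ENNReal)⁻¹ • unifIcc (1 - ε) (1 + ε))
    with hP
  haveI : IsProbabilityMeasure P := by
    constructor
    rw [hP]
    simp only [Measure.add_apply, Measure.smul_apply, smul_eq_mul, unifIcc_univ h0,
      unifIcc_univ h1, mul_one]
    exact ENNReal.inv_two_add_inv_two
  have hInt : Integrable (fun y : ℝ => mmd k (if y < 1 / 2 then A else B)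
      (if y < 1 / 2 then B else A)) P := by
    have hfun : (fun y : ℝ => mmd k (if y < 1 / 2 then A else B) (if y < 1 / 2 then B else A))
        = (Set.Iio (1 / 2 : ℝ)).piecewise (fun _ => mmd k A B) (fun _ => mmd k B A) := by
      funext y
      by_cases h : y < 1 / 2
      · rw [if_pos h, if_pos h, Set.piecewise_eq_of_mem _ _ _ (Set.mem_Iio.mpr h)]
      · rw [if_neg h, if_neg h,
          Set.piecewise_eq_of_notMem _ _ _ (fun hc => h (Set.mem_Iio.mp hc))]
    rw [hfun]
    exact Integrable.piecewise measurableSet_Iio (integrable_const _).integrableOn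
      (integrable_const _).integrableOn
  calc Real.sqrt ((m : ℝ) - 6 * ε) = ∫ _, Real.sqrt ((m : ℝ) - 6 * ε) ∂P := by simp
    _ ≤ ∫ y, mmd k (if y < 1 / 2 then A else B) (if y < 1 / 2 then B else A) ∂P := by
        refine integral_mono_ae (integrable_const _) hInt (.of_forall fun y => ?_)
        dsimp only
        by_cases h : y < 1 / 2
        · rw [if_pos h, if_pos h]; exact hC1
        · rw [if_neg h, if_neg h]; exact hC2
end
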